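/- Let q : ℝ³ → ℝ³ be q(x) = (2x₂², x₂² − x₃, x₂² + x₃) and 𝒬₃ = { (s₀,s₁,s₂) : s₀ ≥ √(s₁² + s₂²) } the second-order cone. Let Γ = { x : q(x) ∈ 𝒬₃ } = { x : x₂² ≥ |x₃| }. Then the mapping x ↦ q(x) − 𝒬₃ is metrically subregular at x̄ = 0 for 0: there exists κ > 0 (one may take κ = √2) such that d(x, Γ) ≤ κ · d(q(x), 𝒬₃) for all x ∈ ℝ³. -/

import Mathlib

/-- The constraint map `q(x) = (2x₂², x₂² - x₃, x₂² + x₃)` of Example 4.4. -/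
noncomputable def qMap : EuclideanSpace ℝ (Fin 3) → EuclideanSpace ℝ (Fin 3) :=
  fun x => WithLp.toLp 2 ![2 * (x 1) ^ 2, (x 1) ^ 2 - x 2, (x 1) ^ 2 + x 2]

/-- The second-order cone `𝒬₃ ⊆ ℝ³`. -/
def socQ3 : Set (EuclideanSpace ℝ (Fin 3)) :=
  {s | Real.sqrt ((s 1) ^ 2 + (s 2) ^ 2) ≤ s 0}

lemma socQ3_bounds {s : EuclideanSpace ℝ (Fin 3)} (hs : s ∈ socQ3) :
    |s 1| ≤ s 0 ∧ |s 2| ≤ s 0 := by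
  have h : Real.sqrt ((s 1) ^ 2 + (s 2) ^ 2) ≤ s 0 := hs
  constructor
  · calc |s 1| = Real.sqrt ((s 1) ^ 2) := (Real.sqrt_sq_eq_abs _).symm
    _ ≤ Real.sqrt ((s 1) ^ 2 + (s 2) ^ 2) := Real.sqrt_le_sqrt (by nlinarith [sq_nonneg (s 2)])
    _ ≤ s 0 := h
  · calc |s 2| = Real.sqrt ((s 2) ^ 2) := (Real.sqrt_sq_eq_abs _).symm
    _ ≤ Real.sqrt ((s 1) ^ 2 + (s 2) ^ 2) := Real.sqrt_le_sqrt (by nlinarith [sq_nonneg (s 1)])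
    _ ≤ s 0 := h

lemma set_eq_aux :
    {x : EuclideanSpace ℝ (Fin 3) | qMap x ∈ socQ3} =
      {x : EuclideanSpace ℝ (Fin 3) | |x 2| ≤ (x 1) ^ 2} := by
  ext x
  simp only [Set.mem_setOf_eq, qMap, socQ3, PiLp.toLp_apply]
  simp only [Matrix.cons_val_zero, Matrix.cons_val_one, Matrix.head_cons,
    Matrix.cons_val_two, Matrix.tail_cons]
  set a := (x 1) ^ 2 with ha
  have ha0 : 0 ≤ a := sq_nonneg _
  set t := x 2
  rw [Real.sqrt_le_iff]
  constructor
  · rintro ⟨-, hsq⟩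
    have h2 : t ^ 2 ≤ a ^ 2 := by nlinarith
    have := Real.sqrt_le_sqrt h2
    rwa [Real.sqrt_sq_eq_abs, Real.sqrt_sq ha0] at this
  · intro h
    refine ⟨by positivity, ?_⟩
    have h2 : t ^ 2 ≤ a ^ 2 := by
      rw [← sq_abs t]; exact pow_le_pow_left₀ (abs_nonneg t) h 2
    nlinarith

set_option maxHeartbeats 1600000 in
/-- The feasible set `Γ = {x : q(x) ∈ 𝒬₃}` equals `{x : x₂² ≥ |x₃|}`, and the map
`x ↦ q(x) - 𝒬₃` is metrically subregular at `0` for `0`: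
`d(x, Γ) ≤ κ d(q(x), 𝒬₃)` for all `x`. -/
theorem stmt14 :
    {x : EuclideanSpace ℝ (Fin 3) | qMap x ∈ socQ3} =
      {x : EuclideanSpace ℝ (Fin 3) | |x 2| ≤ (x 1) ^ 2} ∧
    ∃ κ > (0 : ℝ), ∀ x : EuclideanSpace ℝ (Fin 3),
      Metric.infDist x {x : EuclideanSpace ℝ (Fin 3) | qMap x ∈ socQ3} ≤
        κ * Metric.infDist (qMap x) socQ3 := by
  refine ⟨set_eq_aux, Real.sqrt 2, Real.sqrt_pos.2 (by norm_num), fun x => ?_⟩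
  rw [set_eq_aux]
  set a := (x 1) ^ 2 with ha
  have ha0 : 0 ≤ a := sq_nonneg _
  set t := x 2 with ht
  by_cases h : |t| ≤ a
  · have hx : x ∈ {x : EuclideanSpace ℝ (Fin 3) | |x 2| ≤ (x 1) ^ 2} := h
    rw [Metric.infDist_zero_of_mem hx]
    exact mul_nonneg (Real.sqrt_nonneg 2) Metric.infDist_nonneg
  · push_neg at h
    -- upper bound for d(x, Γ)
    set c : ℝ := if 0 ≤ t then a else -a with hc
    have hcabs : |c| = a := by
      rw [hc]; split_ifs <;> simp [abs_of_nonneg ha0, abs_of_nonpos (neg_nonpos.2 ha0)]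
    set u : EuclideanSpace ℝ (Fin 3) := WithLp.toLp 2 ![x 0, x 1, c] with hu
    have hu1 : u 1 = x 1 := rfl
    have hu2 : u 2 = c := rfl
    have humem : u ∈ {x : EuclideanSpace ℝ (Fin 3) | |x 2| ≤ (x 1) ^ 2} := by
      simp only [Set.mem_setOf_eq, hu1, hu2, hcabs, ← ha, le_refl]
    have hdxu : dist x u = |t| - a := by
      rw [EuclideanSpace.dist_eq, Fin.sum_univ_three]
      have h0 : dist (x 0) (u 0) = 0 := by simp [hu, Real.dist_eq]
      have h1 : dist (x 1) (u 1) = 0 := by simp [hu1, Real.dist_eq]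
      rw [h0, h1]
      have h2 : dist (x 2) (u 2) = |t - c| := by rw [hu2, Real.dist_eq, ht]
      rw [h2]
      have : |t - c| = |t| - a := by
        rw [hc]; split_ifs with h'
        · rw [abs_of_nonneg h', abs_of_nonneg (by rw [abs_of_nonneg h'] at h; linarith)]
        · push_neg at h'
          rw [abs_of_neg h'] at h ⊢
          rw [abs_of_nonpos (by linarith)]
          ring
      rw [this]
      simp [Real.sqrt_sq_eq_abs, abs_of_nonneg (by linarith : (0:ℝ) ≤ |t| - a)]
    have hup : Metric.infDist x {x : EuclideanSpace ℝ (Fin 3) | |x 2| ≤ (x 1) ^ 2}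
        ≤ |t| - a := hdxu ▸ Metric.infDist_le_dist_of_mem humem
    -- lower bound for d(q(x), 𝒬₃)
    have hne : socQ3.Nonempty := ⟨0, by simp [socQ3]⟩
    have hpt : ∀ s ∈ socQ3, (|t| - a) / Real.sqrt 2 ≤ dist (qMap x) s := by
      intro s hs
      obtain ⟨hs1, hs2⟩ := socQ3_bounds hs
      have hq0 : qMap x 0 = 2 * a := rfl
      have hq1 : qMap x 1 = a - t := rfl
      have hq2 : qMap x 2 = a + t := rfl
      have hD : dist (qMap x) s =
          Real.sqrt ((2 * a - s 0) ^ 2 + ((a - t) - s 1) ^ 2 + ((a + t) - s 2) ^ 2) := by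
        rw [EuclideanSpace.dist_eq, Fin.sum_univ_three, Real.dist_eq, Real.dist_eq,
          Real.dist_eq, hq0, hq1, hq2, sq_abs, sq_abs, sq_abs]
      set D := (2 * a - s 0) ^ 2 + ((a - t) - s 1) ^ 2 + ((a + t) - s 2) ^ 2 with hDdef
      have hD0 : 0 ≤ D := by positivity
      have hkey : (|t| - a) ^ 2 ≤ 2 * D := by
        rcases le_or_gt 0 t with h' | h'
        · rw [abs_of_nonneg h']
          have : t - a ≤ |(a + t) - s 2| + |2 * a - s 0| := by
            have e1 : s 2 ≤ s 0 := (abs_le.1 hs2).2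
            have e2 : (a + t) - s 2 ≤ |(a + t) - s 2| := le_abs_self _
            have e3 : s 0 - 2 * a ≤ |2 * a - s 0| := by
              rw [abs_sub_comm]; exact le_abs_self _
            linarith
          nlinarith [sq_nonneg (|(a + t) - s 2| - |2 * a - s 0|), sq_abs ((a + t) - s 2),
            sq_abs (2 * a - s 0), sq_nonneg ((a - t) - s 1), abs_nonneg ((a + t) - s 2),
            abs_nonneg (2 * a - s 0), abs_of_nonneg h', h.le]
        · rw [abs_of_neg h']
          have : -t - a ≤ |(a - t) - s 1| + |2 * a - s 0| := by
            have e1 : s 1 ≤ s 0 := (abs_le.1 hs1).2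
            have e2 : (a - t) - s 1 ≤ |(a - t) - s 1| := le_abs_self _
            have e3 : s 0 - 2 * a ≤ |2 * a - s 0| := by
              rw [abs_sub_comm]; exact le_abs_self _
            linarith
          nlinarith [sq_nonneg (|(a - t) - s 1| - |2 * a - s 0|), sq_abs ((a - t) - s 1),
            sq_abs (2 * a - s 0), sq_nonneg ((a + t) - s 2), abs_nonneg ((a - t) - s 1),
            abs_nonneg (2 * a - s 0), abs_of_neg h', h.le]
      have hδ0 : 0 ≤ |t| - a := by linarith
      have : |t| - a ≤ Real.sqrt (2 * D) := by
        rw [Real.le_sqrt hδ0 (by positivity)]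
        exact hkey
      rw [Real.sqrt_mul (by norm_num : (0:ℝ) ≤ 2)] at this
      rw [hD, div_le_iff₀ (Real.sqrt_pos.2 (by norm_num : (0:ℝ) < 2))]
      linarith [this, Real.sqrt_nonneg D]
    have hlow : (|t| - a) / Real.sqrt 2 ≤ Metric.infDist (qMap x) socQ3 := by
      by_contra hcon
      push_neg at hcon
      obtain ⟨s, hs, hd⟩ := (Metric.infDist_lt_iff hne).1 hcon
      linarith [hpt s hs]
    have h2 : (0:ℝ) < Real.sqrt 2 := Real.sqrt_pos.2 (by norm_num)
    calc Metric.infDist x {x : EuclideanSpace ℝ (Fin 3) | |x 2| ≤ (x 1) ^ 2}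
        ≤ |t| - a := hup
      _ = Real.sqrt 2 * ((|t| - a) / Real.sqrt 2) := by field_simp
      _ ≤ Real.sqrt 2 * Metric.infDist (qMap x) socQ3 := by
          exact mul_le_mul_of_nonneg_left hlow h2.le
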